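/- Let L be a timed language recognized by a K-acceptor, v a timed word, a ∈ Σ, and t_v, t'_v ∈ ℝ≥0 with c^K(v) + t_v ≡^K c^K(v) + t'_v. Set v1 = v(t_v·a) and v2 = v(t'_v·a). Then c^K(v1) ≡^K c^K(v2) and τ_{v2→v1}(v2^{-1}L) = v1^{-1}L. -/

import Mathlib

open scoped NNReal Classical

namespace IRTA

/-- A timestamp is a finite sequence of non-negative reals. -/
abbrev Timestamp : Type := List ℝ≥0

/-- A timed word is a finite sequence of (delay, letter) pairs. -/
abbrev TimedWord (A : Type) : Type := List (ℝ≥0 × A)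

/-- Fractional part of a non-negative real. -/
noncomputable def fracPart (x : ℝ≥0) : ℝ≥0 := x - (⌊x⌋₊ : ℝ≥0)

/-- `x` is a natural-number value. -/
def IsNatVal (x : ℝ≥0) : Prop := ∃ m : ℕ, x = (m : ℝ≥0)

/-- Region equivalence `≡^K`. -/
def RegEq (K : ℕ) (x y : ℝ≥0) : Prop :=
  (⌊x⌋₊ = ⌊y⌋₊ ∧ (fracPart x = 0 ↔ fracPart y = 0)) ∨ ((K : ℝ≥0) < x ∧ (K : ℝ≥0) < y)

/-- One step of the (greedy) clock evolution: reset whenever the value is an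
integer between `0` and `K`. -/
noncomputable def resetStep (K : ℕ) (v : ℝ≥0) : ℝ≥0 :=
  if ∃ m : ℕ, m ≤ K ∧ v = (m : ℝ≥0) then 0 else v

/-- Auxiliary function computing `c^K` with accumulator `v`. -/
noncomputable def cKAux (K : ℕ) : ℝ≥0 → Timestamp → ℝ≥0
  | v, [] => v
  | v, t :: d => cKAux K (resetStep K (v + t)) d

/-- `c^K(d)`: the sum of the delays after the last integral position of `d`. -/
noncomputable def cK (K : ℕ) (d : Timestamp) : ℝ≥0 := cKAux K 0 d

/-- `c^K` of a timed word is `c^K` of its timestamp. -/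
noncomputable def cKW {A : Type} (K : ℕ) (w : TimedWord A) : ℝ≥0 :=
  cK K (w.map Prod.fst)

/-- `c^K_⊤` : `c^K` truncated at `K`. -/
noncomputable def cKTop {A : Type} (K : ℕ) (w : TimedWord A) : WithTop ℝ≥0 :=
  if cKW K w ≤ (K : ℝ≥0) then ((cKW K w : ℝ≥0) : WithTop ℝ≥0) else ⊤

/-! ### Clock constraints and one-clock timed automata -/

/-- Clock constraints `φ ::= x < m | m < x | x = m | φ ∧ φ`. -/
inductive CC : Type where
  | lt : ℕ → CC
  | gt : ℕ → CC
  | eq : ℕ → CC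
  | and : CC → CC → CC

/-- Satisfaction of a clock constraint by a clock value. -/
def CC.sat : CC → ℝ≥0 → Prop
  | .lt m, x => x < (m : ℝ≥0)
  | .gt m, x => (m : ℝ≥0) < x
  | .eq m, x => x = (m : ℝ≥0)
  | .and φ ψ, x => φ.sat x ∧ ψ.sat x

/-- The largest constant appearing in a clock constraint. -/
def CC.maxConst : CC → ℕ
  | .lt m => m
  | .gt m => m
  | .eq m => m
  | .and φ ψ => max φ.maxConst ψ.maxConst

/-- A transition of a one-clock timed automaton; `reset = true` means the
clock is reset (the `r = 0` case). -/
structure TTrans (Q A : Type) where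
  src : Q
  dst : Q
  lab : A
  guard : CC
  reset : Bool

/-- A one-clock timed automaton. -/
structure TA (A : Type) where
  Q : Type
  init : Q
  final : Set Q
  trans : Set (TTrans Q A)

/-- The automaton has finitely many states and transitions. -/
def TA.IsFinite {A : Type} (M : TA A) : Prop := Finite M.Q ∧ M.trans.Finite

/-- Runs of a one-clock timed automaton between configurations. -/
inductive Steps {A : Type} (M : TA A) : M.Q × ℝ≥0 → TimedWord A → M.Q × ℝ≥0 → Prop
  | nil (c : M.Q × ℝ≥0) : Steps M c [] c
  | cons {q : M.Q} {ν t : ℝ≥0} {a : A} {w : TimedWord A} {c : M.Q × ℝ≥0}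
      (θ : TTrans M.Q A) (hθ : θ ∈ M.trans) (hsrc : θ.src = q) (hlab : θ.lab = a)
      (hg : θ.guard.sat (ν + t))
      (hrest : Steps M (θ.dst, if θ.reset then 0 else ν + t) w c) :
      Steps M (q, ν) ((t, a) :: w) c

/-- The language of `M` from a given configuration. -/
def TA.LangFrom {A : Type} (M : TA A) (c : M.Q × ℝ≥0) : Set (TimedWord A) :=
  {w | ∃ q' : M.Q, ∃ ν' : ℝ≥0, Steps M c w (q', ν') ∧ q' ∈ M.final}

/-- The language of `M` (from the initial configuration). -/
def TA.Lang {A : Type} (M : TA A) : Set (TimedWord A) := M.LangFrom (M.init, 0)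

/-- Determinism: distinct transitions with the same source and letter have
disjoint guards. -/
def TA.Deterministic {A : Type} (M : TA A) : Prop :=
  ∀ θ₁ ∈ M.trans, ∀ θ₂ ∈ M.trans, θ₁ ≠ θ₂ → θ₁.src = θ₂.src → θ₁.lab = θ₂.lab →
    ∀ x : ℝ≥0, ¬ (θ₁.guard.sat x ∧ θ₂.guard.sat x)

/-- Completeness: every timed word admits a run from the initial configuration. -/
def TA.Complete {A : Type} (M : TA A) : Prop :=
  ∀ w : TimedWord A, ∃ c : M.Q × ℝ≥0, Steps M (M.init, 0) w c

/-- A 1-IRTA: every resetting transition has an equality guard. -/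
def TA.IsIRTA {A : Type} (M : TA A) : Prop :=
  ∀ θ ∈ M.trans, θ.reset = true → ∃ m : ℕ, θ.guard = CC.eq m

/-- Guards allowed in a strict 1-IRTA with constant `K`. -/
def StrictGuard (K : ℕ) (φ : CC) : Prop :=
  (∃ m : ℕ, φ = CC.eq m) ∨ (∃ m : ℕ, φ = CC.and (CC.gt m) (CC.lt (m + 1))) ∨ φ = CC.gt K

/-- Strictness with constant `K`: every guard is of one of the allowed forms
and a guard is an equality iff the transition resets. -/
def TA.IsStrict {A : Type} (M : TA A) (K : ℕ) : Prop :=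
  ∀ θ ∈ M.trans, StrictGuard K θ.guard ∧ ((∃ m : ℕ, θ.guard = CC.eq m) ↔ θ.reset = true)

/-- All constants appearing in guards are at most `K`. -/
def TA.MaxConstLE {A : Type} (M : TA A) (K : ℕ) : Prop :=
  ∀ θ ∈ M.trans, θ.guard.maxConst ≤ K

/-- `M` reaches the same control state on reading `u` and `v` from the initial
configuration. -/
def TA.SameState {A : Type} (M : TA A) (u v : TimedWord A) : Prop :=
  ∃ q : M.Q, ∃ ν ν' : ℝ≥0, Steps M (M.init, 0) u (q, ν) ∧ Steps M (M.init, 0) v (q, ν')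

/-- A `K`-acceptor. -/
def IsKAcceptor {A : Type} (M : TA A) (K : ℕ) : Prop :=
  M.IsFinite ∧ M.Complete ∧ M.Deterministic ∧ M.IsIRTA ∧ M.IsStrict K ∧ M.MaxConstLE K ∧
    ∀ u v : TimedWord A, M.SameState u v → RegEq K (cKW K u) (cKW K v)

/-! ### Equivalences on timed words -/

/-- `L`-preservation of a relation on timed words. -/
def LPreserving {A : Type} (L : Set (TimedWord A)) (r : TimedWord A → TimedWord A → Prop) :
    Prop :=
  ∀ u v : TimedWord A, r u v → (u ∈ L ↔ v ∈ L)

/-- `K`-monotonicity of a relation on timed words. -/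
def KMonotonic {A : Type} (K : ℕ) (r : TimedWord A → TimedWord A → Prop) : Prop :=
  ∀ u v : TimedWord A, r u v →
    RegEq K (cKW K u) (cKW K v) ∧
      ∀ (a : A) (t t' : ℝ≥0), RegEq K (cKW K u + t) (cKW K v + t') →
        r (u ++ [(t, a)]) (v ++ [(t', a)])

/-- Finite index: there are finitely many classes `{v | r u v}`. -/
def FiniteIndex {A : Type} (r : TimedWord A → TimedWord A → Prop) : Prop :=
  Set.Finite (Set.range fun u : TimedWord A => {v : TimedWord A | r u v})

/-! ### The rescaling maps -/

/-- The bijection `f_{λ→λ'}` of the open unit interval. -/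
noncomputable def fScale (lam lam' t : ℝ≥0) : ℝ≥0 :=
  if t ≤ lam then (lam' / lam) * t else lam' + ((1 - lam') / (1 - lam)) * (t - lam)

/-- The new delay `t'` computed from the current clock values `y, y'` and delay `t`. -/
noncomputable def tauStep (K : ℕ) (y y' t : ℝ≥0) : ℝ≥0 :=
  if (IsNatVal y ∧ IsNatVal y') ∨ ((K : ℝ≥0) < y ∧ (K : ℝ≥0) < y') then t
  else (⌊t⌋₊ : ℝ≥0) + fScale (1 - fracPart y) (1 - fracPart y') (fracPart t)

/-- Auxiliary rescaling map on timestamps, carrying the current clock values. -/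
noncomputable def tauAux (K : ℕ) : ℝ≥0 → ℝ≥0 → Timestamp → Timestamp
  | _, _, [] => []
  | y, y', t :: d =>
      tauStep K y y' t ::
        tauAux K (resetStep K (y + t)) (resetStep K (y' + tauStep K y y' t)) d

/-- The rescaling map `τ_{x→x'}` on timestamps. -/
noncomputable def tau (K : ℕ) (x x' : ℝ≥0) (d : Timestamp) : Timestamp :=
  tauAux K (resetStep K x) (resetStep K x') d

/-- Auxiliary rescaling map on timed words. -/
noncomputable def tauWAux {A : Type} (K : ℕ) : ℝ≥0 → ℝ≥0 → TimedWord A → TimedWord A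
  | _, _, [] => []
  | y, y', (t, a) :: w =>
      (tauStep K y y' t, a) ::
        tauWAux K (resetStep K (y + t)) (resetStep K (y' + tauStep K y y' t)) w

/-- The rescaling map `τ_{x→x'}` on timed words. -/
noncomputable def tauW {A : Type} (K : ℕ) (x x' : ℝ≥0) (w : TimedWord A) : TimedWord A :=
  tauWAux K (resetStep K x) (resetStep K x') w

/-! ### Residuals and the syntactic equivalence -/

/-- The residual language `u^{-1}L`. -/
def residual {A : Type} (L : Set (TimedWord A)) (u : TimedWord A) : Set (TimedWord A) :=
  {w : TimedWord A | u ++ w ∈ L}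

/-- The syntactic equivalence `≈^{L,K}`. -/
def ApproxLK {A : Type} (L : Set (TimedWord A)) (K : ℕ) (u v : TimedWord A) : Prop :=
  RegEq K (cKW K u) (cKW K v) ∧
    (tauW K (cKW K u) (cKW K v)) '' (residual L u) = residual L v

/-! ### The automaton built from a monotonic equivalence -/

/-- The region guard `φ([t])`. -/
noncomputable def phiOf (K : ℕ) (t : ℝ≥0) : CC :=
  if t ≤ (K : ℝ≥0) then
    (if IsNatVal t then CC.eq ⌊t⌋₊ else CC.and (CC.gt ⌊t⌋₊) (CC.lt (⌊t⌋₊ + 1)))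
  else CC.gt K

/-- The automaton `A_≈` built from an equivalence `s` on timed words. -/
noncomputable def Aapprox {A : Type} (L : Set (TimedWord A)) (K : ℕ)
    (s : Setoid (TimedWord A)) : TA A where
  Q := Quotient s
  init := Quotient.mk s ([] : TimedWord A)
  final := {q : Quotient s | ∃ u : TimedWord A, q = Quotient.mk s u ∧ u ∈ L}
  trans := {θ : TTrans (Quotient s) A |
    ∃ (u : TimedWord A) (a : A) (t : ℝ≥0),
      θ.src = Quotient.mk s u ∧ θ.dst = Quotient.mk s (u ++ [(t, a)]) ∧ θ.lab = a ∧
      θ.guard = phiOf K (cKW K u + t) ∧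
      (θ.reset = true ↔ ∃ m : ℕ, m ≤ K ∧ cKW K u + t = (m : ℝ≥0))}

/-! ### Half-integral and small words -/

/-- Every delay has fractional part `0` or `1/2`. -/
def HalfIntegral {A : Type} (w : TimedWord A) : Prop :=
  ∀ p ∈ w, fracPart p.1 = 0 ∨ fracPart p.1 = 1 / 2

/-- Every delay is `< K + 1`. -/
def SmallWord {A : Type} (K : ℕ) (w : TimedWord A) : Prop :=
  ∀ p ∈ w, p.1 < (K : ℝ≥0) + 1

/-- The delays of `Σ_K`: half-integral values `≤ K + 1/2`. -/
def IsSigmaK (K : ℕ) (t : ℝ≥0) : Prop :=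
  (fracPart t = 0 ∨ fracPart t = 1 / 2) ∧ t ≤ (K : ℝ≥0) + 1 / 2

/-- Words over `Σ_K` (small half-integral words). -/
def SigmaWord {A : Type} (K : ℕ) (w : TimedWord A) : Prop :=
  ∀ p ∈ w, IsSigmaK K p.1



/-! ### `K`-acceptors with their region representatives -/

/-- A `K`-acceptor bundled with the half-integral representative of the
unique region of each state. -/
structure KAcc (A : Type) (K : ℕ) where
  M : TA A
  acc : IsKAcceptor M K
  reg : M.Q → ℝ≥0
  regHalf : ∀ q : M.Q, fracPart (reg q) = 0 ∨ fracPart (reg q) = 1 / 2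
  regLe : ∀ q : M.Q, reg q ≤ (K : ℝ≥0) + 1 / 2
  regSpec : ∀ (w : TimedWord A) (q : M.Q) (x : ℝ≥0),
    Steps M (M.init, 0) w (q, x) → RegEq K x (reg q)

/-- The minimization equivalences `∼^i` on the states of a `K`-acceptor. -/
def simEq {A : Type} {K : ℕ} (B : KAcc A K) : ℕ → B.M.Q → B.M.Q → Prop
  | 0, p, q => B.reg p = B.reg q ∧ (p ∈ B.M.final ↔ q ∈ B.M.final)
  | i + 1, p, q => simEq B i p q ∧
      ∀ (t : ℝ≥0) (a : A), IsSigmaK K t →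
        ∀ θ₁ θ₂ : TTrans B.M.Q A, θ₁ ∈ B.M.trans → θ₂ ∈ B.M.trans →
          θ₁.src = p → θ₂.src = q → θ₁.lab = a → θ₂.lab = a →
          θ₁.guard = phiOf K t → θ₂.guard = phiOf K t →
          simEq B i θ₁.dst θ₂.dst

/-- The quotient automaton `B/∼^m`. -/
noncomputable def quotTA {A : Type} {K : ℕ} (B : KAcc A K) (m : ℕ) : TA A where
  Q := Quot (simEq B m)
  init := Quot.mk (simEq B m) B.M.init
  final := {c : Quot (simEq B m) | ∃ q ∈ B.M.final, c = Quot.mk (simEq B m) q}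
  trans := {θ : TTrans (Quot (simEq B m)) A |
    ∃ θ₀ ∈ B.M.trans,
      θ.src = Quot.mk (simEq B m) θ₀.src ∧ θ.dst = Quot.mk (simEq B m) θ₀.dst ∧
      θ.lab = θ₀.lab ∧ θ.guard = θ₀.guard ∧ θ.reset = θ₀.reset}

/-! ### Observation tables -/

/-- An observation table over `Σ_K`. -/
structure ObsTable (A : Type) (K : ℕ) where
  U1 : Set (TimedWord A)
  E : Set (TimedWord A)
  val : TimedWord A → TimedWord A → Bool
  U1fin : U1.Finite
  Efin : E.Finite
  U1sigma : ∀ u ∈ U1, SigmaWord K u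
  Esigma : ∀ e ∈ E, SigmaWord K e
  epsU1 : ([] : TimedWord A) ∈ U1
  prefixClosed : ∀ (u : TimedWord A) (x : ℝ≥0 × A), u ++ [x] ∈ U1 → u ∈ U1
  epsE : ([] : TimedWord A) ∈ E
  suffixClosed : ∀ (x : ℝ≥0 × A) (e : TimedWord A), x :: e ∈ E → e ∈ E

/-- The set `U2` of one-letter `Σ_K`-extensions of `U1`. -/
def obsU2 {A : Type} {K : ℕ} (T : ObsTable A K) : Set (TimedWord A) :=
  {w : TimedWord A | ∃ u ∈ T.U1, ∃ (t : ℝ≥0) (a : A), IsSigmaK K t ∧ w = u ++ [(t, a)]}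

/-- `R(u)`: the row of `u` (restricted to `E`) together with `c^K_⊤(u)`. -/
noncomputable def Rof {A : Type} {K : ℕ} (T : ObsTable A K) (u : TimedWord A) :
    ({e : TimedWord A // e ∈ T.E} → Bool) × WithTop ℝ≥0 :=
  (fun e => T.val u e.1, cKTop K u)

/-- The table is closed. -/
def ObsTable.Closed {A : Type} {K : ℕ} (T : ObsTable A K) : Prop :=
  ∀ w ∈ obsU2 T, ∃ u ∈ T.U1, Rof T w = Rof T u

/-- The table is consistent. -/
def ObsTable.Consistent {A : Type} {K : ℕ} (T : ObsTable A K) : Prop :=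
  ∀ u ∈ T.U1, ∀ w ∈ T.U1, Rof T u = Rof T w →
    ∀ (t : ℝ≥0) (a : A), IsSigmaK K t → Rof T (u ++ [(t, a)]) = Rof T (w ++ [(t, a)])

/-- The automaton `A_𝒯` induced by a (closed and consistent) observation table. -/
noncomputable def ATable {A : Type} {K : ℕ} (T : ObsTable A K) : TA A where
  Q := {f : ({e : TimedWord A // e ∈ T.E} → Bool) × WithTop ℝ≥0 // ∃ u ∈ T.U1, f = Rof T u}
  init := ⟨Rof T [], ⟨[], T.epsU1, rfl⟩⟩
  final := {q | ∃ u ∈ T.U1, q.1 = Rof T u ∧ T.val u [] = true}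
  trans := {θ | ∃ u ∈ T.U1, ∃ (t : ℝ≥0) (a : A), IsSigmaK K t ∧
      θ.src.1 = Rof T u ∧ θ.dst.1 = Rof T (u ++ [(t, a)]) ∧ θ.lab = a ∧
      θ.guard = phiOf K (cKW K u + t) ∧
      (θ.reset = true ↔ ∃ m : ℕ, m ≤ K ∧ cKW K u + t = (m : ℝ≥0))}

/-- A `K`-acceptor is consistent with the observation table `𝒯`. -/
def ConsistentWith {A : Type} {K : ℕ} (M : TA A) (T : ObsTable A K) : Prop :=
  ∀ w : TimedWord A, (w ∈ T.U1 ∨ w ∈ obsU2 T) → ∀ e ∈ T.E,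
    ∀ (q : M.Q) (ν : ℝ≥0), Steps M (M.init, 0) (w ++ e) (q, ν) →
      (q ∈ M.final ↔ T.val w e = true)

/-- Isomorphism of one-clock timed automata. -/
structure TAIso {A : Type} (M N : TA A) where
  toEquiv : M.Q ≃ N.Q
  init_eq : toEquiv M.init = N.init
  final_iff : ∀ q : M.Q, q ∈ M.final ↔ toEquiv q ∈ N.final
  trans_iff : ∀ θ : TTrans M.Q A,
    θ ∈ M.trans ↔
      (⟨toEquiv θ.src, toEquiv θ.dst, θ.lab, θ.guard, θ.reset⟩ : TTrans N.Q A) ∈ N.trans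

/-! ### Helper lemmas -/

lemma floor_le' (x : ℝ≥0) : (⌊x⌋₊ : ℝ≥0) ≤ x := Nat.floor_le zero_le

lemma fracPart_lt_one (x : ℝ≥0) : fracPart x < 1 := by
  rw [fracPart]
  have h := Nat.lt_floor_add_one x
  have : x < (⌊x⌋₊ : ℝ≥0) + 1 := by exact_mod_cast h
  exact tsub_lt_iff_left (floor_le' x) |>.2 (by rwa [add_comm] at this)

lemma floor_add_fracPart (x : ℝ≥0) : (⌊x⌋₊ : ℝ≥0) + fracPart x = x :=
  add_tsub_cancel_of_le (floor_le' x)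

lemma fracPart_eq_zero_iff (x : ℝ≥0) : fracPart x = 0 ↔ IsNatVal x := by
  constructor
  · intro h
    exact ⟨⌊x⌋₊, by conv_lhs => rw [← floor_add_fracPart x, h, add_zero]⟩
  · rintro ⟨m, rfl⟩
    simp [fracPart, Nat.floor_natCast]

lemma floor_add_of_lt_one (n : ℕ) (s : ℝ≥0) (hs : s < 1) : ⌊(n : ℝ≥0) + s⌋₊ = n := by
  rw [Nat.floor_eq_iff (by positivity)]
  constructor
  · exact le_add_right le_rfl
  · exact add_lt_add_right hs _

lemma fracPart_add_of_lt_one (n : ℕ) (s : ℝ≥0) (hs : s < 1) :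
    fracPart ((n : ℝ≥0) + s) = s := by
  rw [fracPart, floor_add_of_lt_one n s hs, add_tsub_cancel_left]
lemma eq_floor_of_fracPart_zero {x : ℝ≥0} (h : fracPart x = 0) : x = (⌊x⌋₊ : ℝ≥0) := by
  conv_lhs => rw [← floor_add_fracPart x, h, add_zero]

lemma fracPart_natCast (m : ℕ) : fracPart (m : ℝ≥0) = 0 := by
  simp [fracPart, Nat.floor_natCast]

lemma regEq_refl (K : ℕ) (x : ℝ≥0) : RegEq K x x := Or.inl ⟨rfl, Iff.rfl⟩

lemma regEq_symm {K : ℕ} {x y : ℝ≥0} (h : RegEq K x y) : RegEq K y x := by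
  rcases h with ⟨h1, h2⟩ | ⟨h1, h2⟩
  · exact Or.inl ⟨h1.symm, h2.symm⟩
  · exact Or.inr ⟨h2, h1⟩

lemma regEq_nat {K : ℕ} {x y : ℝ≥0} {m : ℕ} (h : RegEq K x y) (hm : m ≤ K)
    (hx : x = (m : ℝ≥0)) : y = (m : ℝ≥0) := by
  rcases h with ⟨h1, h2⟩ | ⟨h1, h2⟩
  · have hfx : fracPart x = 0 := hx ▸ fracPart_natCast m
    have hfy : fracPart y = 0 := h2.mp hfx
    have : y = (⌊y⌋₊ : ℝ≥0) := eq_floor_of_fracPart_zero hfy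
    rw [this, ← h1, hx, Nat.floor_natCast]
  · exfalso
    rw [hx] at h1
    exact absurd (Nat.cast_le.mpr hm) (not_le.mpr h1)

lemma regEq_pos_frac {x : ℝ≥0} {m : ℕ} (hm : ⌊x⌋₊ = m) (hf : fracPart x ≠ 0) :
    (m : ℝ≥0) < x := by
  have h1 : (m : ℝ≥0) ≤ x := hm ▸ floor_le' x
  rcases h1.lt_or_eq with h | h
  · exact h
  · exact absurd (h ▸ fracPart_natCast m) hf

lemma sat_of_regEq {K : ℕ} {φ : CC} (hs : StrictGuard K φ) (hc : φ.maxConst ≤ K)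
    {x y : ℝ≥0} (h : RegEq K x y) (hx : φ.sat x) : φ.sat y := by
  rcases hs with ⟨m, rfl⟩ | ⟨m, rfl⟩ | rfl
  · exact regEq_nat h hc hx
  · obtain ⟨hx1, hx2⟩ := hx
    have hmK : m + 1 ≤ K := le_trans (le_max_right _ _) hc
    have hxK : x < (K : ℝ≥0) := lt_of_lt_of_le hx2 (by exact_mod_cast hmK)
    have hfloorx : ⌊x⌋₊ = m := by
      rw [Nat.floor_eq_iff (show (0 : ℝ≥0) ≤ x from zero_le)]
      exact ⟨hx1.le, by exact_mod_cast hx2⟩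
    have hfx : fracPart x ≠ 0 := by
      intro h0
      have := eq_floor_of_fracPart_zero h0
      rw [this, hfloorx] at hx1
      exact lt_irrefl _ hx1
    rcases h with ⟨h1, h2⟩ | ⟨h1, h2⟩
    · have hfy : fracPart y ≠ 0 := fun h0 => hfx (h2.mpr h0)
      have hfloory : ⌊y⌋₊ = m := h1 ▸ hfloorx
      refine ⟨regEq_pos_frac hfloory hfy, ?_⟩
      have := Nat.lt_floor_add_one y
      rw [hfloory] at this
      exact_mod_cast this
    · exact absurd hxK (not_lt.mpr h1.le)
  · rcases h with ⟨h1, h2⟩ | ⟨h1, h2⟩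
    · have hKfx : (K : ℕ) ≤ ⌊x⌋₊ := Nat.le_floor hx.le
      rcases lt_or_eq_of_le hKfx with hlt | heq
      · calc (K : ℝ≥0) < (⌊x⌋₊ : ℝ≥0) := by exact_mod_cast hlt
          _ = (⌊y⌋₊ : ℝ≥0) := by rw [h1]
          _ ≤ y := floor_le' y
      · have hfx : fracPart x ≠ 0 := by
          intro h0
          have := eq_floor_of_fracPart_zero h0
          rw [this, ← heq] at hx
          exact lt_irrefl _ hx
        have hfy : fracPart y ≠ 0 := fun h0 => hfx (h2.mpr h0)
        have : ⌊y⌋₊ = K := by rw [← h1, ← heq]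
        exact regEq_pos_frac this hfy
    · exact h2
lemma resetStep_of_nat {K : ℕ} {v : ℝ≥0} (h : ∃ m : ℕ, m ≤ K ∧ v = (m : ℝ≥0)) :
    resetStep K v = 0 := if_pos h

lemma resetStep_of_not {K : ℕ} {v : ℝ≥0} (h : ¬ ∃ m : ℕ, m ≤ K ∧ v = (m : ℝ≥0)) :
    resetStep K v = v := if_neg h

lemma resetStep_zero (K : ℕ) : resetStep K 0 = 0 :=
  resetStep_of_nat ⟨0, Nat.zero_le K, by simp⟩

lemma resetStep_idem (K : ℕ) (v : ℝ≥0) : resetStep K (resetStep K v) = resetStep K v := by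
  by_cases h : ∃ m : ℕ, m ≤ K ∧ v = (m : ℝ≥0)
  · rw [resetStep_of_nat h, resetStep_zero]
  · rw [resetStep_of_not h]; rw [resetStep_of_not h]

lemma regEq_resetStep {K : ℕ} {x y : ℝ≥0} (h : RegEq K x y) :
    RegEq K (resetStep K x) (resetStep K y) := by
  by_cases hx : ∃ m : ℕ, m ≤ K ∧ x = (m : ℝ≥0)
  · obtain ⟨m, hm, hxm⟩ := hx
    have hy : y = (m : ℝ≥0) := regEq_nat h hm hxm
    rw [resetStep_of_nat ⟨m, hm, hxm⟩, resetStep_of_nat ⟨m, hm, hy⟩]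
    exact regEq_refl K 0
  · by_cases hy : ∃ m : ℕ, m ≤ K ∧ y = (m : ℝ≥0)
    · obtain ⟨m, hm, hym⟩ := hy
      exact absurd ⟨m, hm, regEq_nat (regEq_symm h) hm hym⟩ hx
    · rw [resetStep_of_not hx, resetStep_of_not hy]
      exact h
lemma regEq_of_parts {K N : ℕ} {s s' : ℝ≥0} (hs : s < 1) (hs' : s' < 1)
    (hz : s = 0 ↔ s' = 0) : RegEq K ((N : ℝ≥0) + s) ((N : ℝ≥0) + s') :=
  Or.inl ⟨by rw [floor_add_of_lt_one N s hs, floor_add_of_lt_one N s' hs'],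
    by rw [fracPart_add_of_lt_one N s hs, fracPart_add_of_lt_one N s' hs']; exact hz⟩

lemma regEq_tauStep {K : ℕ} {y y' : ℝ≥0} (h : RegEq K y y') (t : ℝ≥0) :
    RegEq K (y + t) (y' + tauStep K y y' t) := by
  unfold tauStep
  by_cases hc : (IsNatVal y ∧ IsNatVal y') ∨ ((K : ℝ≥0) < y ∧ (K : ℝ≥0) < y')
  · rw [if_pos hc]
    rcases hc with ⟨⟨m, hm⟩, ⟨m', hm'⟩⟩ | ⟨h1, h2⟩
    · rcases h with ⟨h1, _⟩ | ⟨h1, h2⟩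
      · have hyy : y = y' := by
          rw [hm, hm'] at h1 ⊢
          rw [Nat.floor_natCast, Nat.floor_natCast] at h1
          exact_mod_cast h1
        rw [hyy]; exact regEq_refl _ _
      · exact Or.inr ⟨lt_of_lt_of_le h1 le_self_add, lt_of_lt_of_le h2 le_self_add⟩
    · exact Or.inr ⟨lt_of_lt_of_le h1 le_self_add, lt_of_lt_of_le h2 le_self_add⟩
  · rw [if_neg hc]
    push_neg at hc
    obtain ⟨hc1, hc2⟩ := hc
    rcases h with ⟨h1, h2⟩ | ⟨h1, h2⟩
    swap
    · exact absurd h2 (not_lt.mpr (hc2 h1))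
    have hfy : fracPart y ≠ 0 := by
      intro h0
      exact hc1 ((fracPart_eq_zero_iff y).1 h0) ((fracPart_eq_zero_iff y').1 (h2.mp h0))
    have hfy' : fracPart y' ≠ 0 := fun h0 => hfy (h2.mpr h0)
    set f := fracPart y with hf_def
    set f' := fracPart y' with hf'_def
    set g := fracPart t with hg_def
    set lam := 1 - f with hlam_def
    set lam' := 1 - f' with hlam'_def
    have hf1 : f < 1 := fracPart_lt_one y
    have hf'1 : f' < 1 := fracPart_lt_one y'
    have hg1 : g < 1 := fracPart_lt_one t
    have hfpos : 0 < f := zero_lt_iff.mpr hfy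
    have hf'pos : 0 < f' := zero_lt_iff.mpr hfy'
    have hflam : f + lam = 1 := add_tsub_cancel_of_le hf1.le
    have hf'lam' : f' + lam' = 1 := add_tsub_cancel_of_le hf'1.le
    have hlampos : 0 < lam := tsub_pos_of_lt hf1
    have hlam'pos : 0 < lam' := tsub_pos_of_lt hf'1
    have hlamlt : lam < 1 := by
      rw [hlam_def]; exact tsub_lt_self one_pos hfpos
    have h1lam : 1 - lam = f := tsub_tsub_cancel_of_le hf1.le
    have h1lam' : 1 - lam' = f' := tsub_tsub_cancel_of_le hf'1.le
    have hy_eq : y = (⌊y⌋₊ : ℝ≥0) + f := (floor_add_fracPart y).symm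
    have hy'_eq : y' = (⌊y⌋₊ : ℝ≥0) + f' := by
      rw [h1]; exact (floor_add_fracPart y').symm
    have ht_eq : t = (⌊t⌋₊ : ℝ≥0) + g := (floor_add_fracPart t).symm
    set n := ⌊y⌋₊
    set k := ⌊t⌋₊
    rcases lt_trichotomy g lam with hgl | hgl | hgl
    · -- g < lam
      rw [fScale, if_pos hgl.le]
      have key1 : y + t = ((n + k : ℕ) : ℝ≥0) + (f + g) := by
        rw [hy_eq, ht_eq]; push_cast; ring
      have key2 : y' + ((k : ℝ≥0) + lam' / lam * g) =
          ((n + k : ℕ) : ℝ≥0) + (f' + lam' / lam * g) := by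
        rw [hy'_eq]; push_cast; ring
      rw [key1, key2]
      have hslt : lam' / lam * g < lam' := by
        have := mul_lt_mul_of_pos_left hgl (div_pos hlam'pos hlampos)
        rwa [div_mul_cancel₀ lam' hlampos.ne'] at this
      refine regEq_of_parts ?_ ?_ ?_
      · calc f + g < f + lam := add_lt_add_right hgl f
          _ = 1 := hflam
      · calc f' + lam' / lam * g < f' + lam' := add_lt_add_right hslt f'
          _ = 1 := hf'lam'
      · constructor
        · intro h0; exact absurd (add_eq_zero.mp h0).1 hfy
        · intro h0; exact absurd (add_eq_zero.mp h0).1 hfy'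
    · -- g = lam
      rw [fScale, if_pos hgl.le]
      have hsc : lam' / lam * g = lam' := by
        rw [hgl, div_mul_cancel₀ lam' hlampos.ne']
      have key : y + t = y' + ((k : ℝ≥0) + lam' / lam * g) := by
        rw [hsc, hy_eq, hy'_eq, ht_eq, hgl]
        calc (n : ℝ≥0) + f + ((k : ℝ≥0) + lam) = (n : ℝ≥0) + (k : ℝ≥0) + (f + lam) := by ring
          _ = (n : ℝ≥0) + (k : ℝ≥0) + (f' + lam') := by rw [hflam, hf'lam']
          _ = (n : ℝ≥0) + f' + ((k : ℝ≥0) + lam') := by ring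
      rw [key]; exact regEq_refl _ _
    · -- lam < g
      rw [fScale, if_neg (not_le.mpr hgl)]
      set e := g - lam with he_def
      have hepos : 0 < e := tsub_pos_of_lt hgl
      have hge : lam + e = g := add_tsub_cancel_of_le hgl.le
      have heltf : e < f := by
        rw [he_def, tsub_lt_iff_left hgl.le, add_comm lam f, hflam]
        exact hg1
      set s := (1 - lam') / (1 - lam) * e with hs_def
      have hs_eq : s = f' / f * e := by rw [hs_def, h1lam, h1lam']
      have hspos : 0 < s := by
        rw [hs_eq]; exact mul_pos (div_pos hf'pos hfpos) hepos
      have hsltf' : s < f' := by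
        rw [hs_eq]
        have := mul_lt_mul_of_pos_left heltf (div_pos hf'pos hfpos)
        rwa [div_mul_cancel₀ f' hfpos.ne'] at this
      have key1 : y + t = ((n + k + 1 : ℕ) : ℝ≥0) + e := by
        rw [hy_eq, ht_eq, ← hge]
        calc (n : ℝ≥0) + f + ((k : ℝ≥0) + (lam + e))
            = (n : ℝ≥0) + (k : ℝ≥0) + (f + lam) + e := by ring
          _ = ((n + k + 1 : ℕ) : ℝ≥0) + e := by rw [hflam]; push_cast; ring
      have key2 : y' + ((k : ℝ≥0) + (lam' + s)) = ((n + k + 1 : ℕ) : ℝ≥0) + s := by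
        rw [hy'_eq]
        calc (n : ℝ≥0) + f' + ((k : ℝ≥0) + (lam' + s))
            = (n : ℝ≥0) + (k : ℝ≥0) + (f' + lam') + s := by ring
          _ = ((n + k + 1 : ℕ) : ℝ≥0) + s := by rw [hf'lam']; push_cast; ring
      rw [key1, key2]
      exact regEq_of_parts (lt_trans heltf hf1) (lt_trans hsltf' hf'1)
        (iff_of_false hepos.ne' hspos.ne')
lemma tauStep_tauStep {K : ℕ} {y y' : ℝ≥0} (h : RegEq K y y') (t : ℝ≥0) :
    tauStep K y' y (tauStep K y y' t) = t := by
  by_cases hc : (IsNatVal y ∧ IsNatVal y') ∨ ((K : ℝ≥0) < y ∧ (K : ℝ≥0) < y')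
  · have hc' : (IsNatVal y' ∧ IsNatVal y) ∨ ((K : ℝ≥0) < y' ∧ (K : ℝ≥0) < y) := by tauto
    simp only [tauStep]
    rw [if_pos hc, if_pos hc']
  · have hc' : ¬ ((IsNatVal y' ∧ IsNatVal y) ∨ ((K : ℝ≥0) < y' ∧ (K : ℝ≥0) < y)) := by tauto
    have hcn := hc
    push_neg at hcn
    obtain ⟨hc1, hc2⟩ := hcn
    rcases h with ⟨h1, h2⟩ | ⟨h1, h2⟩
    swap
    · exact absurd h2 (not_lt.mpr (hc2 h1))
    have hfy : fracPart y ≠ 0 := by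
      intro h0
      exact hc1 ((fracPart_eq_zero_iff y).1 h0) ((fracPart_eq_zero_iff y').1 (h2.mp h0))
    have hfy' : fracPart y' ≠ 0 := fun h0 => hfy (h2.mpr h0)
    set f := fracPart y with hf_def
    set f' := fracPart y' with hf'_def
    set g := fracPart t with hg_def
    set lam := 1 - f with hlam_def
    set lam' := 1 - f' with hlam'_def
    have hf1 : f < 1 := fracPart_lt_one y
    have hf'1 : f' < 1 := fracPart_lt_one y'
    have hg1 : g < 1 := fracPart_lt_one t
    have hfpos : 0 < f := zero_lt_iff.mpr hfy
    have hf'pos : 0 < f' := zero_lt_iff.mpr hfy'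
    have hflam : f + lam = 1 := add_tsub_cancel_of_le hf1.le
    have hf'lam' : f' + lam' = 1 := add_tsub_cancel_of_le hf'1.le
    have hlampos : 0 < lam := tsub_pos_of_lt hf1
    have hlam'pos : 0 < lam' := tsub_pos_of_lt hf'1
    have hlam'lt : lam' < 1 := by rw [hlam'_def]; exact tsub_lt_self one_pos hf'pos
    have h1lam : 1 - lam = f := tsub_tsub_cancel_of_le hf1.le
    have h1lam' : 1 - lam' = f' := tsub_tsub_cancel_of_le hf'1.le
    set k := ⌊t⌋₊
    have ht_eq : t = (k : ℝ≥0) + g := (floor_add_fracPart t).symm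
    have hfs_lt_one : fScale lam lam' g < 1 := by
      rw [fScale]
      by_cases hgl : g ≤ lam
      · rw [if_pos hgl]
        calc lam' / lam * g ≤ lam' / lam * lam :=
              mul_le_mul_of_nonneg_left hgl zero_le
          _ = lam' := div_mul_cancel₀ lam' hlampos.ne'
          _ < 1 := hlam'lt
      · rw [if_neg hgl]
        push_neg at hgl
        have heltf : g - lam < f := by
          rw [tsub_lt_iff_left hgl.le, add_comm lam f, hflam]; exact hg1
        have hs : (1 - lam') / (1 - lam) * (g - lam) < f' := by
          rw [h1lam, h1lam']
          have := mul_lt_mul_of_pos_left heltf (div_pos hf'pos hfpos)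
          rwa [div_mul_cancel₀ f' hfpos.ne'] at this
        calc lam' + (1 - lam') / (1 - lam) * (g - lam) < lam' + f' := add_lt_add_right hs lam'
          _ = 1 := by rw [add_comm]; exact hf'lam'
    simp only [tauStep]
    rw [if_neg hc, if_neg hc',
      floor_add_of_lt_one k _ hfs_lt_one, fracPart_add_of_lt_one k _ hfs_lt_one]
    have hinv : fScale lam' lam (fScale lam lam' g) = g := by
      rw [fScale]
      by_cases hgl : g ≤ lam
      · have hle : fScale lam lam' g ≤ lam' := by
          rw [fScale, if_pos hgl]
          calc lam' / lam * g ≤ lam' / lam * lam :=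
                mul_le_mul_of_nonneg_left hgl zero_le
            _ = lam' := div_mul_cancel₀ lam' hlampos.ne'
        rw [if_pos hle, fScale, if_pos hgl, ← mul_assoc]
        have : lam / lam' * (lam' / lam) = 1 := by
          rw [div_mul_div_comm, mul_comm]
          exact div_self (by positivity)
        rw [this, one_mul]
      · push_neg at hgl
        have hfs : fScale lam lam' g = lam' + (1 - lam') / (1 - lam) * (g - lam) := by
          rw [fScale, if_neg (not_le.mpr hgl)]
        have hspos : 0 < (1 - lam') / (1 - lam) * (g - lam) := by
          rw [h1lam, h1lam']
          exact mul_pos (div_pos hf'pos hfpos) (tsub_pos_of_lt hgl)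
        have hnle : ¬ fScale lam lam' g ≤ lam' := by
          rw [hfs]; exact not_le.mpr (lt_add_of_pos_right lam' hspos)
        rw [if_neg hnle, hfs, add_tsub_cancel_left, h1lam, h1lam', ← mul_assoc]
        have : f / f' * (f' / f) = 1 := by
          rw [div_mul_div_comm, mul_comm]
          exact div_self (by positivity)
        rw [this, one_mul, add_tsub_cancel_of_le hgl.le]
    rw [hinv]
    exact ht_eq.symm
lemma steps_comp {A : Type} {M : TA A} {c c' c'' : M.Q × ℝ≥0} {u w : TimedWord A}
    (h1 : Steps M c u c') (h2 : Steps M c' w c'') : Steps M c (u ++ w) c'' := by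
  induction h1 with
  | nil c => exact h2
  | cons θ hθ hsrc hlab hg hrest ih => exact Steps.cons θ hθ hsrc hlab hg (ih h2)

lemma steps_split {A : Type} {M : TA A} {c c'' : M.Q × ℝ≥0} {u w : TimedWord A}
    (h : Steps M c (u ++ w) c'') : ∃ c', Steps M c u c' ∧ Steps M c' w c'' := by
  induction u generalizing c with
  | nil => exact ⟨c, Steps.nil c, h⟩
  | cons p u ih =>
    obtain ⟨t, a⟩ := p
    cases h with
    | cons θ hθ hsrc hlab hg hrest =>
      obtain ⟨c', h1, h2⟩ := ih hrest
      exact ⟨c', Steps.cons θ hθ hsrc hlab hg h1, h2⟩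

lemma steps_unique {A : Type} {M : TA A} (hdet : M.Deterministic) :
    ∀ {w : TimedWord A} {c c₁ c₂ : M.Q × ℝ≥0},
      Steps M c w c₁ → Steps M c w c₂ → c₁ = c₂ := by
  intro w
  induction w with
  | nil =>
    intro c c₁ c₂ h1 h2
    cases h1; cases h2; rfl
  | cons p w ih =>
    obtain ⟨t, a⟩ := p
    intro c c₁ c₂ h1 h2
    cases h1 with
    | cons θ₁ hθ₁ hsrc₁ hlab₁ hg₁ hrest₁ =>
      cases h2 with
      | cons θ₂ hθ₂ hsrc₂ hlab₂ hg₂ hrest₂ =>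
        have hθeq : θ₁ = θ₂ := by
          by_contra hne
          exact hdet θ₁ hθ₁ θ₂ hθ₂ hne (hsrc₁.trans hsrc₂.symm) (hlab₁.trans hlab₂.symm)
            _ ⟨hg₁, hg₂⟩
        subst hθeq
        exact ih hrest₁ hrest₂

lemma reset_eq_resetStep {A : Type} {K : ℕ} {M : TA A} (hstrict : M.IsStrict K)
    (hmax : M.MaxConstLE K) {θ : TTrans M.Q A} (hθ : θ ∈ M.trans) {x : ℝ≥0}
    (hx : θ.guard.sat x) : (if θ.reset then 0 else x) = resetStep K x := by
  obtain ⟨hs, hiff⟩ := hstrict θ hθ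
  have hm := hmax θ hθ
  rcases hs with ⟨m, hg⟩ | ⟨m, hg⟩ | hg
  · have hr : θ.reset = true := hiff.mp ⟨m, hg⟩
    rw [hg] at hx hm
    rw [hr, if_pos rfl, resetStep_of_nat ⟨m, hm, hx⟩]
  · have hr : θ.reset = false := by
      cases hr' : θ.reset
      · rfl
      · obtain ⟨m', hm'⟩ := hiff.mpr hr'
        rw [hg] at hm'
        exact absurd hm' (by simp)
    rw [hg] at hx
    obtain ⟨hx1, hx2⟩ := hx
    have hnot : ¬ ∃ m' : ℕ, m' ≤ K ∧ x = (m' : ℝ≥0) := by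
      rintro ⟨m', _, rfl⟩
      have hx1' : (m : ℝ≥0) < (m' : ℝ≥0) := hx1
      have hx2' : (m' : ℝ≥0) < ((m + 1 : ℕ) : ℝ≥0) := hx2
      have h1 : m < m' := by exact_mod_cast hx1'
      have h2 : m' < m + 1 := by exact_mod_cast hx2'
      omega
    rw [hr, if_neg (by simp), resetStep_of_not hnot]
  · have hr : θ.reset = false := by
      cases hr' : θ.reset
      · rfl
      · obtain ⟨m', hm'⟩ := hiff.mpr hr'
        rw [hg] at hm'
        exact absurd hm' (by simp)
    rw [hg] at hx
    have hnot : ¬ ∃ m' : ℕ, m' ≤ K ∧ x = (m' : ℝ≥0) := by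
      rintro ⟨m', hm', rfl⟩
      have : (K : ℝ≥0) < (m' : ℝ≥0) := hx
      have : K < m' := by exact_mod_cast this
      omega
    rw [hr, if_neg (by simp), resetStep_of_not hnot]

lemma steps_clock {A : Type} {K : ℕ} {M : TA A} (hstrict : M.IsStrict K)
    (hmax : M.MaxConstLE K) :
    ∀ {w : TimedWord A} {c c' : M.Q × ℝ≥0}, Steps M c w c' →
      c'.2 = cKAux K c.2 (w.map Prod.fst) := by
  intro w c c' h
  induction h with
  | nil c => rfl
  | cons θ hθ hsrc hlab hg hrest ih =>
    rename_i q ν t a w' c''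
    rw [List.map_cons, cKAux]
    rw [← reset_eq_resetStep hstrict hmax hθ hg]
    exact ih

lemma cKAux_append (K : ℕ) (d : Timestamp) :
    ∀ (s t : ℝ≥0), cKAux K s (d ++ [t]) = resetStep K (cKAux K s d + t) := by
  induction d with
  | nil => intro s t; rfl
  | cons t' d ih => intro s t; rw [List.cons_append, cKAux, cKAux, ih]

lemma cKW_append {A : Type} (K : ℕ) (v : TimedWord A) (t : ℝ≥0) (a : A) :
    cKW K (v ++ [(t, a)]) = resetStep K (cKW K v + t) := by
  rw [cKW, cKW, cK, cK, List.map_append, List.map_cons, List.map_nil]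
  exact cKAux_append K _ 0 t
lemma langFrom_tau {A : Type} {K : ℕ} {M : TA A} (hstrict : M.IsStrict K)
    (hmax : M.MaxConstLE K) :
    ∀ (w : TimedWord A) (q : M.Q) (y y' : ℝ≥0), RegEq K y y' →
      w ∈ M.LangFrom (q, y) → tauWAux K y y' w ∈ M.LangFrom (q, y') := by
  intro w
  induction w with
  | nil =>
    intro q y y' hreg hw
    obtain ⟨qf, νf, hsteps, hfin⟩ := hw
    cases hsteps
    exact ⟨q, y', Steps.nil _, hfin⟩
  | cons p w ih =>
    obtain ⟨t, a⟩ := p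
    intro q y y' hreg hw
    obtain ⟨qf, νf, hsteps, hfin⟩ := hw
    cases hsteps with
    | cons θ hθ hsrc hlab hg hrest =>
      set t' := tauStep K y y' t with ht'_def
      have hreg' : RegEq K (y + t) (y' + t') := regEq_tauStep hreg t
      have hg' : θ.guard.sat (y' + t') :=
        sat_of_regEq (hstrict θ hθ).1 (hmax θ hθ) hreg' hg
      have hif : (if θ.reset then 0 else y + t) = resetStep K (y + t) :=
        reset_eq_resetStep hstrict hmax hθ hg
      have hif' : (if θ.reset then 0 else y' + t') = resetStep K (y' + t') :=
        reset_eq_resetStep hstrict hmax hθ hg'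
      rw [hif] at hrest
      have hregr : RegEq K (resetStep K (y + t)) (resetStep K (y' + t')) :=
        regEq_resetStep hreg'
      have hmem : w ∈ M.LangFrom (θ.dst, resetStep K (y + t)) := ⟨qf, νf, hrest, hfin⟩
      obtain ⟨qf', νf', hrest', hfin'⟩ := ih θ.dst _ _ hregr hmem
      refine ⟨qf', νf', ?_, hfin'⟩
      show Steps M (q, y') ((t', a) :: tauWAux K (resetStep K (y + t)) (resetStep K (y' + t')) w) _
      refine Steps.cons θ hθ hsrc hlab hg' ?_
      rw [hif']
      exact hrest'

lemma tauWAux_tauWAux {A : Type} {K : ℕ} :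
    ∀ (w : TimedWord A) (y y' : ℝ≥0), RegEq K y y' →
      tauWAux K y' y (tauWAux K y y' w) = w := by
  intro w
  induction w with
  | nil => intro y y' _; rfl
  | cons p w ih =>
    obtain ⟨t, a⟩ := p
    intro y y' hreg
    have hts : tauStep K y' y (tauStep K y y' t) = t := tauStep_tauStep hreg t
    show (tauStep K y' y (tauStep K y y' t), a) ::
        tauWAux K (resetStep K (y' + tauStep K y y' t))
          (resetStep K (y + tauStep K y' y (tauStep K y y' t)))
          (tauWAux K (resetStep K (y + t)) (resetStep K (y' + tauStep K y y' t)) w)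
        = (t, a) :: w
    rw [hts]
    rw [ih _ _ (regEq_resetStep (regEq_tauStep hreg t))]
lemma residual_eq_langFrom {A : Type} {M : TA A} (hdet : M.Deterministic)
    {u : TimedWord A} {c : M.Q × ℝ≥0} (hu : Steps M (M.init, 0) u c) :
    residual M.Lang u = M.LangFrom c := by
  ext w
  constructor
  · rintro ⟨qf, νf, hs, hf⟩
    obtain ⟨c', hu', hw⟩ := steps_split hs
    have hc : c' = c := steps_unique hdet hu' hu
    subst hc
    exact ⟨qf, νf, hw, hf⟩
  · rintro ⟨qf, νf, hw, hf⟩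
    exact ⟨qf, νf, steps_comp hu hw, hf⟩

/-- two region-equivalent one-step extensions of the same word
have rescaling-related residuals. -/
theorem statement10 {A : Type} [Finite A] (K : ℕ) (L : Set (TimedWord A))
    (B : TA A) (hB : IsKAcceptor B K) (hL : B.Lang = L)
    (v : TimedWord A) (a : A) (tv tv' : ℝ≥0)
    (h : RegEq K (cKW K v + tv) (cKW K v + tv')) :
    RegEq K (cKW K (v ++ [(tv, a)])) (cKW K (v ++ [(tv', a)])) ∧
      (tauW K (cKW K (v ++ [(tv', a)])) (cKW K (v ++ [(tv, a)]))) ''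
          (residual L (v ++ [(tv', a)])) = residual L (v ++ [(tv, a)]) := by
  obtain ⟨_, hcomp, hdet, _, hstrict, hmax, _⟩ := hB
  subst hL
  set x := cKW K v with hx_def
  have hck1 : cKW K (v ++ [(tv, a)]) = resetStep K (x + tv) := cKW_append K v tv a
  have hck2 : cKW K (v ++ [(tv', a)]) = resetStep K (x + tv') := cKW_append K v tv' a
  set X1 := resetStep K (x + tv) with hX1_def
  set X2 := resetStep K (x + tv') with hX2_def
  have hregX : RegEq K X1 X2 := regEq_resetStep h
  constructor
  · rw [hck1, hck2]; exact hregX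
  -- obtain the run of B on v
  obtain ⟨c1, hrun1⟩ := hcomp (v ++ [(tv, a)])
  obtain ⟨⟨qv, νv⟩, hv, hstep1⟩ := steps_split hrun1
  have hν : νv = cKW K v := steps_clock hstrict hmax hv
  rw [← hx_def] at hν
  subst hν
  clear hrun1
  cases hstep1 with
  | cons θ₁ hθ₁ hsrc₁ hlab₁ hg₁ hrest₁ =>
  cases hrest₁
  -- the run of B on v ++ [(tv', a)]
  obtain ⟨c2, hrun2⟩ := hcomp (v ++ [(tv', a)])
  obtain ⟨cv', hv', hstep2⟩ := steps_split hrun2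
  have hcv : cv' = (qv, x) := steps_unique hdet hv' hv
  subst hcv
  clear hrun2
  cases hstep2 with
  | cons θ₂ hθ₂ hsrc₂ hlab₂ hg₂ hrest₂ =>
  cases hrest₂
  have hg₁' : θ₁.guard.sat (x + tv') :=
    sat_of_regEq (hstrict θ₁ hθ₁).1 (hmax θ₁ hθ₁) h hg₁
  have hθeq : θ₁ = θ₂ := by
    by_contra hne
    exact hdet θ₁ hθ₁ θ₂ hθ₂ hne (hsrc₁.trans hsrc₂.symm) (hlab₁.trans hlab₂.symm)
      (x + tv') ⟨hg₁', hg₂⟩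
  subst hθeq
  -- runs to the two one-step extensions
  have hv1run : Steps B (B.init, 0) (v ++ [(tv, a)]) (θ₁.dst, X1) := by
    have hstep : Steps B (qv, x) [(tv, a)] (θ₁.dst, if θ₁.reset then 0 else x + tv) :=
      Steps.cons θ₁ hθ₁ hsrc₁ hlab₁ hg₁ (Steps.nil _)
    rw [reset_eq_resetStep hstrict hmax hθ₁ hg₁] at hstep
    exact steps_comp hv hstep
  have hv2run : Steps B (B.init, 0) (v ++ [(tv', a)]) (θ₁.dst, X2) := by
    have hstep : Steps B (qv, x) [(tv', a)] (θ₁.dst, if θ₁.reset then 0 else x + tv') :=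
      Steps.cons θ₁ hθ₁ hsrc₁ hlab₁ hg₁' (Steps.nil _)
    rw [reset_eq_resetStep hstrict hmax hθ₁ hg₁'] at hstep
    exact steps_comp hv hstep
  have hres1 : residual B.Lang (v ++ [(tv, a)]) = B.LangFrom (θ₁.dst, X1) :=
    residual_eq_langFrom hdet hv1run
  have hres2 : residual B.Lang (v ++ [(tv', a)]) = B.LangFrom (θ₁.dst, X2) :=
    residual_eq_langFrom hdet hv2run
  have htauW : ∀ w : TimedWord A, tauW K (cKW K (v ++ [(tv', a)])) (cKW K (v ++ [(tv, a)])) w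
      = tauWAux K X2 X1 w := by
    intro w
    rw [hck1, hck2, tauW, hX1_def, hX2_def, resetStep_idem, resetStep_idem]
  rw [hres1, hres2]
  ext w'
  constructor
  · rintro ⟨w, hw, rfl⟩
    rw [htauW w]
    exact langFrom_tau hstrict hmax w θ₁.dst X2 X1 (regEq_symm hregX) hw
  · intro hw'
    refine ⟨tauWAux K X1 X2 w', langFrom_tau hstrict hmax w' θ₁.dst X1 X2 hregX hw', ?_⟩
    rw [htauW]
    exact tauWAux_tauWAux w' X1 X2 hregX

end IRTA
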